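/- Let D be a discrete topological space of cardinality ω₁. Then the hyperspace CL(D) of nonempty (closed) subsets of D with the Vietoris topology does not have an ω^ω-base; in fact, the point D ∈ CL(D) has no ω^ω-base of neighborhoods. -/

import Mathlib

open Set Filter Topology

/-- `CL X`: the nonempty closed subsets of `X`. -/
abbrev CL (X : Type*) [TopologicalSpace X] := {A : Set X // A.Nonempty ∧ IsClosed A}

/-- An `ω^ω`-base of neighborhoods at a point `y` of a space with topology `t`:
a neighborhood base `{U_α : α ∈ ω^ω}` with `U_β ⊆ U_α` whenever `α ≤ β` pointwise. -/
def HasOmegaOmegaBaseAt {Y : Type*} (t : TopologicalSpace Y) (y : Y) : Prop :=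
  ∃ U : (ℕ → ℕ) → Set Y, (∀ α, U α ∈ @nhds Y t y) ∧
    (∀ α β : ℕ → ℕ, α ≤ β → U β ⊆ U α) ∧
    ∀ V ∈ @nhds Y t y, ∃ α, U α ⊆ V

/-- The Vietoris topology on `CL X`, generated by the sets `U⁺` and `U⁻` for `U` open. -/
def vietoris (X : Type*) [TopologicalSpace X] : TopologicalSpace (CL X) :=
  TopologicalSpace.generateFrom
    ({S | ∃ U : Set X, IsOpen U ∧ S = {A : CL X | (A : Set X) ⊆ U}} ∪
     {S | ∃ U : Set X, IsOpen U ∧ S = {A : CL X | ((A : Set X) ∩ U).Nonempty}})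

/-- The Fell topology on `CL X`, generated by the sets `U⁻` for `U` open and
`(Kᶜ)⁺` for `K` compact. -/
def fell (X : Type*) [TopologicalSpace X] : TopologicalSpace (CL X) :=
  TopologicalSpace.generateFrom
    ({S | ∃ U : Set X, IsOpen U ∧ S = {A : CL X | ((A : Set X) ∩ U).Nonempty}} ∪
     {S | ∃ K : Set X, IsCompact K ∧ S = {A : CL X | (A : Set X) ⊆ Kᶜ}})

/-- Combinatorial core: if `D` is uncountable, then for any `α : D → ω^ω` there is a
single `β ∈ ω^ω` dominating `α x` for infinitely many `x`. -/
lemma exists_bound_infinite {D : Type*} (α : D → ℕ → ℕ)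
    (hD : ¬ (Set.univ : Set D).Countable) :
    ∃ β : ℕ → ℕ, {x : D | α x ≤ β}.Infinite := by
  classical
  have hstep : ∀ (B : Set D), ¬ B.Countable → ∀ n : ℕ,
      ∃ k, ¬ {y ∈ B | α y n = k}.Countable := by
    intro B hB n
    by_contra h
    push_neg at h
    apply hB
    have hBeq : B = ⋃ k : ℕ, {y ∈ B | α y n = k} := by
      ext y
      simp only [Set.mem_iUnion, Set.mem_setOf_eq]
      exact ⟨fun hy => ⟨α y n, hy, rfl⟩, fun ⟨k, hk, _⟩ => hk⟩
    rw [hBeq]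
    exact Set.countable_iUnion h
  let g : Set D → ℕ → ℕ := fun B n =>
    if h : ¬ B.Countable then (hstep B h n).choose else 0
  let A : ℕ → Set D := fun n =>
    Nat.rec Set.univ (fun n B => {y ∈ B | α y n = g B n}) n
  have hAsucc : ∀ n, A (n + 1) = {y ∈ A n | α y n = g (A n) n} := fun n => rfl
  have hAunc : ∀ n, ¬ (A n).Countable := by
    intro n
    induction n with
    | zero => exact hD
    | succ n ih =>
      rw [hAsucc]
      have hg : g (A n) n = (hstep (A n) ih n).choose := dif_pos ih
      rw [hg]
      exact (hstep (A n) ih n).choose_spec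
  set σ : ℕ → ℕ := fun n => g (A n) n with hσ
  have hmem : ∀ n y, y ∈ A (n + 1) → y ∈ A n ∧ α y n = σ n := by
    intro n y hy
    rw [hAsucc] at hy
    exact hy
  have hAagree : ∀ n y, y ∈ A (n + 1) → ∀ k ≤ n, α y k = σ k := by
    intro n
    induction n with
    | zero =>
      intro y hy k hk
      rw [Nat.le_zero] at hk
      subst hk
      exact (hmem 0 y hy).2
    | succ n ih =>
      intro y hy k hk
      rcases Nat.lt_succ_iff_lt_or_eq.mp (Nat.lt_succ_of_le hk) with h | h
      · exact ih y (hmem (n + 1) y hy).1 k (Nat.lt_succ_iff.mp h)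
      · subst h
        exact (hmem (n + 1) y hy).2
  have hfex : ∀ (n : ℕ) (s : List D), ∃ y, y ∈ A (n + 1) ∧ y ∉ s := by
    intro n s
    by_contra h
    push_neg at h
    exact hAunc (n + 1) (((s.finite_toSet).countable).mono (fun y hy => h y hy))
  choose f hf1 hf2 using hfex
  let L : ℕ → List D := fun n => Nat.rec [] (fun n Ln => Ln ++ [f n Ln]) n
  let x : ℕ → D := fun n => f n (L n)
  have hL : ∀ n, L (n + 1) = L n ++ [x n] := fun n => rfl
  have hmemL : ∀ m n, m < n → x m ∈ L n := by
    intro m n h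
    induction n with
    | zero => omega
    | succ n ih =>
      rw [hL]
      rcases Nat.lt_succ_iff_lt_or_eq.mp h with h' | h'
      · exact List.mem_append_left _ (ih h')
      · subst h'
        exact List.mem_append_right _ (List.mem_singleton_self _)
  have hinj : Function.Injective x := by
    have key : ∀ m n, m < n → x m ≠ x n := by
      intro m n hmn heq
      have hmm := hmemL m n hmn
      rw [heq] at hmm
      exact hf2 n (L n) hmm
    intro m n h
    rcases lt_trichotomy m n with h' | h' | h'
    · exact absurd h (key m n h')
    · exact h'
    · exact absurd h.symm (key n m h')
  refine ⟨fun k => max (σ k) ((Finset.range (k + 1)).sup fun m => α (x m) k), ?_⟩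
  apply Set.infinite_of_injective_forall_mem hinj
  intro m
  intro k
  rcases le_or_gt m k with h | h
  · exact le_max_of_le_right
      (Finset.le_sup (f := fun m => α (x m) k) (Finset.mem_range.mpr (by omega)))
  · have hx : x m ∈ A (m + 1) := hf1 m (L m)
    have := hAagree m (x m) hx k (by omega)
    rw [this]
    exact le_max_left _ _

section Vietoris

variable {D : Type*} [TopologicalSpace D] [DiscreteTopology D]

lemma mem_nhds_vietoris_univ (A : CL D) (hA : (A : Set D) = Set.univ) (x : D) :
    {H : CL D | x ∈ (H : Set D)} ∈ @nhds (CL D) (vietoris D) A := by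
  have hopen : @IsOpen (CL D) (vietoris D) {H : CL D | x ∈ (H : Set D)} := by
    have heq : {H : CL D | x ∈ (H : Set D)} =
        {H : CL D | ((H : Set D) ∩ {x}).Nonempty} := by
      ext H
      simp [Set.inter_singleton_nonempty]
    rw [heq]
    exact TopologicalSpace.GenerateOpen.basic _
      (Or.inr ⟨{x}, isOpen_discrete _, rfl⟩)
  refine @IsOpen.mem_nhds (CL D) (vietoris D) A _ hopen ?_
  show x ∈ (A : Set D)
  rw [hA]
  trivial

lemma nhds_vietoris_univ_finite [Nonempty D] (A : CL D)
    (hA : (A : Set D) = Set.univ)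
    {V : Set (CL D)} (hV : V ∈ @nhds (CL D) (vietoris D) A) :
    ∃ F : Set D, F.Finite ∧ F.Nonempty ∧
      ∀ H : CL D, F ⊆ (H : Set D) → H ∈ V := by
  classical
  unfold vietoris at hV
  rw [TopologicalSpace.nhds_generateFrom, ← Filter.generate_eq_biInf,
    Filter.mem_generate_iff] at hV
  obtain ⟨t, hts, htfin, htV⟩ := hV
  obtain ⟨x₀⟩ := ‹Nonempty D›
  have hpt : ∀ s ∈ t, ∃ y : D, ∀ H : CL D, y ∈ (H : Set D) → H ∈ s := by
    intro s hs
    obtain ⟨hAs, hgen⟩ := hts hs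
    rcases hgen with ⟨W, _, rfl⟩ | ⟨W, _, rfl⟩
    · refine ⟨x₀, fun H _ => ?_⟩
      have hW : W = Set.univ := Set.eq_univ_of_univ_subset (hA ▸ hAs)
      simp [hW]
    · obtain ⟨y, _, hyW⟩ := hAs
      exact ⟨y, fun H hyH => ⟨y, hyH, hyW⟩⟩
  choose! c hc using hpt
  refine ⟨insert x₀ (c '' t), (htfin.image c).insert x₀,
    ⟨x₀, Set.mem_insert _ _⟩, ?_⟩
  intro H hH
  apply htV
  intro s hs
  exact hc s hs H (hH (Set.mem_insert_of_mem _ (Set.mem_image_of_mem c hs)))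

end Vietoris

/-- If `D` is discrete of cardinality `ω₁`, then the point `D ∈ CL(D)` has no
`ω^ω`-base of neighborhoods in `(CL(D), τ_V)`; in particular `(CL(D), τ_V)`
does not have an `ω^ω`-base. -/
theorem hyperspace_vietoris_discrete_omega1_no_omegaOmegaBase
    {D : Type*} [TopologicalSpace D] [DiscreteTopology D]
    (hD : Cardinal.mk D = Cardinal.aleph 1) :
    ∀ A : CL D, (A : Set D) = Set.univ → ¬ HasOmegaOmegaBaseAt (vietoris D) A := by
  intro A hA hbase
  have hne : Nonempty D := by
    rw [← Cardinal.mk_ne_zero_iff, hD]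
    exact (Cardinal.aleph0_pos.trans Cardinal.aleph0_lt_aleph_one).ne'
  have huncount : ¬ (Set.univ : Set D).Countable := by
    rw [Set.countable_univ_iff, ← Cardinal.mk_le_aleph0_iff, hD]
    exact not_le.mpr Cardinal.aleph0_lt_aleph_one
  obtain ⟨U, hUnhds, hUmono, hUbase⟩ := hbase
  have hx : ∀ x : D, ∃ γ, U γ ⊆ {H : CL D | x ∈ (H : Set D)} :=
    fun x => hUbase _ (mem_nhds_vietoris_univ A hA x)
  choose α hα using hx
  obtain ⟨β, hβ⟩ := exists_bound_infinite α huncount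
  obtain ⟨F, hFfin, hFne, hF⟩ := nhds_vietoris_univ_finite A hA (hUnhds β)
  obtain ⟨x, hxβ, hxF⟩ := (hβ.diff hFfin).nonempty
  have hHF : (⟨F, hFne, isClosed_discrete F⟩ : CL D) ∈ U β := hF _ (subset_refl F)
  exact hxF (hα x (hUmono _ _ hxβ hHF))
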